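/- Pruning conserves conflict-free behaviors: for any set of lifelines L', if i ↝_{L'} i', t ∈ ρ(i), and t contains no action on any lifeline of L', then t ∈ ρ(i'). -/
import Mathlib


/-- Conflict predicate: trace `t` contains an action occurring on lifeline `l`. -/
def conflict {A L : Type} (theta : A → L) : List A → L → Prop
  | [], _ => False
  | a :: t, l => theta a = l ∨ conflict theta t l

/-- Conditional conflict predicate: trace `t` contains an action on lifeline `l` with `l ∉ r`. -/
def condConflict {A L : Type} (theta : A → L) (r : Set L) : List A → L → Prop
  | [], _ => False
  | a :: t, l => (theta a = l ∧ l ∉ r) ∨ condConflict theta r t l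

/-- Conditional sequencing: `CondSeq theta r t1 t2 t` means `t ∈ t1 ⫽_r t2`. -/
inductive CondSeq {A L : Type} (theta : A → L) (r : Set L) :
    List A → List A → List A → Prop
  | nil_left (t2 : List A) : CondSeq theta r [] t2 t2
  | nil_right (t1 : List A) : CondSeq theta r t1 [] t1
  | left {a1 a2 : A} {t1 t2 t : List A} :
      CondSeq theta r t1 (a2 :: t2) t →
      CondSeq theta r (a1 :: t1) (a2 :: t2) (a1 :: t)
  | right {a1 a2 : A} {t1 t2 t : List A} :
      CondSeq theta r (a1 :: t1) t2 t →
      ¬ condConflict theta r (a1 :: t1) (theta a2) →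
      CondSeq theta r (a1 :: t1) (a2 :: t2) (a2 :: t)

/-- Interaction terms. -/
inductive Interaction (A L : Type) where
  | empty : Interaction A L
  | act : A → Interaction A L
  | alt : Interaction A L → Interaction A L → Interaction A L
  | strict : Interaction A L → Interaction A L → Interaction A L
  | coreg : Set L → Interaction A L → Interaction A L → Interaction A L
  | loopS : Interaction A L → Interaction A L
  | loopC : Set L → Interaction A L → Interaction A L

/-- Concatenation (strict sequencing) of sets of traces. -/
def concatSet {A : Type} (S1 S2 : Set (List A)) : Set (List A) :=
  {t | ∃ u ∈ S1, ∃ v ∈ S2, t = u ++ v}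

/-- Conditional sequencing of sets of traces. -/
def condSeqSet {A L : Type} (theta : A → L) (r : Set L) (S1 S2 : Set (List A)) :
    Set (List A) :=
  {t | ∃ u ∈ S1, ∃ v ∈ S2, CondSeq theta r u v t}

/-- `j`-th power of a trace set under a binary scheduling operator. -/
def powOp {A : Type} (op : Set (List A) → Set (List A) → Set (List A))
    (S : Set (List A)) : ℕ → Set (List A)
  | 0 => {([] : List A)}
  | n + 1 => op S (powOp op S n)

/-- Kleene closure of a trace set under a binary scheduling operator. -/
def kleene {A : Type} (op : Set (List A) → Set (List A) → Set (List A))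
    (S : Set (List A)) : Set (List A) :=
  ⋃ n : ℕ, powOp op S n

/-- Denotational semantics of interactions (sets of global traces). -/
def rho {A L : Type} (theta : A → L) : Interaction A L → Set (List A)
  | .empty => {([] : List A)}
  | .act a => {[a]}
  | .alt i1 i2 => rho theta i1 ∪ rho theta i2
  | .strict i1 i2 => concatSet (rho theta i1) (rho theta i2)
  | .coreg r i1 i2 => condSeqSet theta r (rho theta i1) (rho theta i2)
  | .loopS i1 => kleene concatSet (rho theta i1)
  | .loopC r i1 => kleene (condSeqSet theta r) (rho theta i1)

/-- `CannotPrune theta L' i` : all behaviors of `i` involve an action on a lifeline of `L'`. -/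
inductive CannotPrune {A L : Type} (theta : A → L) (L' : Set L) : Interaction A L → Prop
  | act {a : A} : theta a ∈ L' → CannotPrune theta L' (.act a)
  | alt {i1 i2 : Interaction A L} :
      CannotPrune theta L' i1 → CannotPrune theta L' i2 → CannotPrune theta L' (.alt i1 i2)
  | strict_left {i1 i2 : Interaction A L} :
      CannotPrune theta L' i1 → CannotPrune theta L' (.strict i1 i2)
  | strict_right {i1 i2 : Interaction A L} :
      CannotPrune theta L' i2 → CannotPrune theta L' (.strict i1 i2)
  | coreg_left {r : Set L} {i1 i2 : Interaction A L} :
      CannotPrune theta L' i1 → CannotPrune theta L' (.coreg r i1 i2)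
  | coreg_right {r : Set L} {i1 i2 : Interaction A L} :
      CannotPrune theta L' i2 → CannotPrune theta L' (.coreg r i1 i2)

/-- Pruning relation: `Prunes theta L' i i'` means `i ↝_{L'} i'`. -/
inductive Prunes {A L : Type} (theta : A → L) (L' : Set L) :
    Interaction A L → Interaction A L → Prop
  | empty : Prunes theta L' .empty .empty
  | act {a : A} : theta a ∉ L' → Prunes theta L' (.act a) (.act a)
  | alt_both {i1 i2 i1' i2' : Interaction A L} :
      Prunes theta L' i1 i1' → Prunes theta L' i2 i2' →
      Prunes theta L' (.alt i1 i2) (.alt i1' i2')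
  | alt_left {i1 i2 i1' : Interaction A L} :
      Prunes theta L' i1 i1' → CannotPrune theta L' i2 →
      Prunes theta L' (.alt i1 i2) i1'
  | alt_right {i1 i2 i2' : Interaction A L} :
      Prunes theta L' i2 i2' → CannotPrune theta L' i1 →
      Prunes theta L' (.alt i1 i2) i2'
  | strict {i1 i2 i1' i2' : Interaction A L} :
      Prunes theta L' i1 i1' → Prunes theta L' i2 i2' →
      Prunes theta L' (.strict i1 i2) (.strict i1' i2')
  | coreg {r : Set L} {i1 i2 i1' i2' : Interaction A L} :
      Prunes theta L' i1 i1' → Prunes theta L' i2 i2' →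
      Prunes theta L' (.coreg r i1 i2) (.coreg r i1' i2')
  | loopS {i1 i1' : Interaction A L} :
      Prunes theta L' i1 i1' → Prunes theta L' (.loopS i1) (.loopS i1')
  | loopS_elim {i1 : Interaction A L} :
      CannotPrune theta L' i1 → Prunes theta L' (.loopS i1) .empty
  | loopC {r : Set L} {i1 i1' : Interaction A L} :
      Prunes theta L' i1 i1' → Prunes theta L' (.loopC r i1) (.loopC r i1')
  | loopC_elim {r : Set L} {i1 : Interaction A L} :
      CannotPrune theta L' i1 → Prunes theta L' (.loopC r i1) .empty


lemma conflict_append {A L : Type} (theta : A → L) (u v : List A) (l : L) :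
    conflict theta (u ++ v) l ↔ conflict theta u l ∨ conflict theta v l := by
  induction u with
  | nil => simp [conflict]
  | cons a u ih => simp [conflict, ih, or_assoc]

lemma condSeq_conflict {A L : Type} {theta : A → L} {r : Set L} {u v t : List A}
    (h : CondSeq theta r u v t) (l : L) :
    conflict theta t l ↔ conflict theta u l ∨ conflict theta v l := by
  induction h with
  | nil_left t2 => simp [conflict]
  | nil_right t1 => simp [conflict]
  | left _ ih => simp [conflict, ih, or_assoc]
  | right _ _ ih =>
      simp only [conflict, ih]
      tauto

lemma cannotPrune_conflict {A L : Type} {theta : A → L} {L' : Set L}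
    {i : Interaction A L} (h : CannotPrune theta L' i) :
    ∀ t ∈ rho theta i, ∃ l ∈ L', conflict theta t l := by
  induction h with
  | act ha =>
      intro t ht
      rcases ht with rfl
      exact ⟨_, ha, Or.inl rfl⟩
  | alt _ _ ih1 ih2 =>
      intro t ht
      rcases ht with ht | ht
      · exact ih1 t ht
      · exact ih2 t ht
  | strict_left _ ih =>
      intro t ht
      rcases ht with ⟨u, hu, v, hv, rfl⟩
      obtain ⟨l, hl, hc⟩ := ih u hu
      exact ⟨l, hl, (conflict_append theta u v l).2 (Or.inl hc)⟩
  | strict_right _ ih =>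
      intro t ht
      rcases ht with ⟨u, hu, v, hv, rfl⟩
      obtain ⟨l, hl, hc⟩ := ih v hv
      exact ⟨l, hl, (conflict_append theta u v l).2 (Or.inr hc)⟩
  | coreg_left _ ih =>
      intro t ht
      rcases ht with ⟨u, hu, v, hv, hcs⟩
      obtain ⟨l, hl, hc⟩ := ih u hu
      exact ⟨l, hl, (condSeq_conflict hcs l).2 (Or.inl hc)⟩
  | coreg_right _ ih =>
      intro t ht
      rcases ht with ⟨u, hu, v, hv, hcs⟩
      obtain ⟨l, hl, hc⟩ := ih v hv
      exact ⟨l, hl, (condSeq_conflict hcs l).2 (Or.inr hc)⟩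

/-- Pruning conserves conflict-free behaviors. -/
theorem prune_conserves_conflict_free {A L : Type} (theta : A → L)
    (L' : Set L) (i i' : Interaction A L) (t : List A)
    (h : Prunes theta L' i i') (ht : t ∈ rho theta i)
    (hfree : ∀ l ∈ L', ¬ conflict theta t l) :
    t ∈ rho theta i' := by
  induction h generalizing t with
  | empty => exact ht
  | act _ => exact ht
  | alt_both h1 h2 ih1 ih2 =>
      rcases ht with ht | ht
      · exact Or.inl (ih1 t ht hfree)
      · exact Or.inr (ih2 t ht hfree)
  | alt_left h1 hcp ih1 =>
      rcases ht with ht | ht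
      · exact ih1 t ht hfree
      · obtain ⟨l, hl, hc⟩ := cannotPrune_conflict hcp t ht
        exact absurd hc (hfree l hl)
  | alt_right h2 hcp ih2 =>
      rcases ht with ht | ht
      · obtain ⟨l, hl, hc⟩ := cannotPrune_conflict hcp t ht
        exact absurd hc (hfree l hl)
      · exact ih2 t ht hfree
  | strict h1 h2 ih1 ih2 =>
      rcases ht with ⟨u, hu, v, hv, rfl⟩
      refine ⟨u, ih1 u hu ?_, v, ih2 v hv ?_, rfl⟩
      · intro l hl hc
        exact hfree l hl ((conflict_append theta u v l).2 (Or.inl hc))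
      · intro l hl hc
        exact hfree l hl ((conflict_append theta u v l).2 (Or.inr hc))
  | coreg h1 h2 ih1 ih2 =>
      rcases ht with ⟨u, hu, v, hv, hcs⟩
      refine ⟨u, ih1 u hu ?_, v, ih2 v hv ?_, hcs⟩
      · intro l hl hc
        exact hfree l hl ((condSeq_conflict hcs l).2 (Or.inl hc))
      · intro l hl hc
        exact hfree l hl ((condSeq_conflict hcs l).2 (Or.inr hc))
  | loopS h1 ih1 =>
      rcases ht with ⟨S, ⟨n, rfl⟩, hn⟩
      refine Set.mem_iUnion.2 ⟨n, ?_⟩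
      induction n generalizing t with
      | zero => exact hn
      | succ n ihn =>
          rcases hn with ⟨u, hu, v, hv, rfl⟩
          refine ⟨u, ih1 u hu ?_, v, ihn v ?_ hv, rfl⟩
          · intro l hl hc
            exact hfree l hl ((conflict_append theta u v l).2 (Or.inl hc))
          · intro l hl hc
            exact hfree l hl ((conflict_append theta u v l).2 (Or.inr hc))
  | loopS_elim hcp =>
      rcases ht with ⟨S, ⟨n, rfl⟩, hn⟩
      cases n with
      | zero => exact hn
      | succ n =>
          rcases hn with ⟨u, hu, v, hv, rfl⟩
          obtain ⟨l, hl, hc⟩ := cannotPrune_conflict hcp u hu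
          exact absurd ((conflict_append theta u v l).2 (Or.inl hc)) (hfree l hl)
  | loopC h1 ih1 =>
      rcases ht with ⟨S, ⟨n, rfl⟩, hn⟩
      refine Set.mem_iUnion.2 ⟨n, ?_⟩
      induction n generalizing t with
      | zero => exact hn
      | succ n ihn =>
          rcases hn with ⟨u, hu, v, hv, hcs⟩
          refine ⟨u, ih1 u hu ?_, v, ihn v ?_ hv, hcs⟩
          · intro l hl hc
            exact hfree l hl ((condSeq_conflict hcs l).2 (Or.inl hc))
          · intro l hl hc
            exact hfree l hl ((condSeq_conflict hcs l).2 (Or.inr hc))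
  | loopC_elim hcp =>
      rcases ht with ⟨S, ⟨n, rfl⟩, hn⟩
      cases n with
      | zero => exact hn
      | succ n =>
          rcases hn with ⟨u, hu, v, hv, hcs⟩
          obtain ⟨l, hl, hc⟩ := cannotPrune_conflict hcp u hu
          exact absurd ((condSeq_conflict hcs l).2 (Or.inl hc)) (hfree l hl)
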